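/- For a model I and consistent formula S, the class of I in C = ∅ lex(L_1)...lex(L_n) is at most the least class containing a model of S if and only if I satisfies under(S; L_n,...,L_1); equivalently, I ⊨ maxset(S ∨ Form({I}), L_n,...,L_1) if and only if I ⊨ under(S; L_n,...,L_1). -/

import Mathlib

open Set
open scoped Classical

variable {M : Type*}

namespace BeliefRevision

/-- `minSet C P`: the minimal models of `P` according to the total preorder `C`,
i.e. `C(i) ∩ Mod(P)` for the least `i` making this nonempty. -/
noncomputable def minSet : List (Set M) → Set M → Set M
  | [], _ => ∅
  | X :: rest, P => if (X ∩ P).Nonempty then X ∩ P else minSet rest P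

/-- Equivalence of total preorders: same minimal models for every formula. -/
def equivC (C C' : List (Set M)) : Prop :=
  ∀ P : Set M, minSet C P = minSet C' P

/-- A total preorder: an ordered partition (empty classes allowed) of all models. -/
def IsPartition (C : List (Set M)) : Prop :=
  C.Pairwise Disjoint ∧ C.foldr (· ∪ ·) ∅ = Set.univ

/-- Lexicographic revision. -/
def lex (C : List (Set M)) (L : Set M) : List (Set M) :=
  C.map (· ∩ L) ++ C.map (· \ L)

/-- Refinement. -/
def refi (C : List (Set M)) (R : Set M) : List (Set M) :=
  C.flatMap fun X => [X ∩ R, X \ R]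

/-- Natural revision: `[C(i)∩P, C(0),...,C(i-1), C(i)\P, C(i+1),...,C(m)]`. -/
noncomputable def natr : List (Set M) → Set M → List (Set M)
  | [], _ => []
  | X :: rest, P =>
    if (X ∩ P).Nonempty then (X ∩ P) :: (X \ P) :: rest
    else
      match natr rest P with
      | a :: r => a :: X :: r
      | [] => [X]

/-- Severe antiwithdrawal: merge classes `0..i` where `i` is least with `C(i)∩P ≠ ∅`. -/
noncomputable def sevw : List (Set M) → Set M → List (Set M)
  | [], _ => []
  | X :: rest, P =>
    if (X ∩ P).Nonempty then X :: rest
    else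
      match sevw rest P with
      | a :: r => (X ∪ a) :: r
      | [] => [X]

/-- Restrained revision. -/
noncomputable def res : List (Set M) → Set M → List (Set M)
  | [], _ => []
  | X :: rest, P =>
    if (X ∩ P).Nonempty then
      (X ∩ P) :: (X \ P) :: rest.flatMap (fun Y => [Y ∩ P, Y \ P])
    else
      match res rest P with
      | a :: r => a :: (X ∩ P) :: (X \ P) :: r
      | [] => [X ∩ P, X \ P]

/-- Very radical revision. -/
def rad (C : List (Set M)) (P : Set M) : List (Set M) :=
  C.map (· ∩ P) ++ [C.foldr (· ∪ ·) ∅ \ P]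

/-- Severe revision: `[C(i)∩P, (C(0)∪...∪C(i))\P, C(i+1),...,C(m)]`. -/
noncomputable def sevr : List (Set M) → Set M → List (Set M)
  | [], _ => []
  | X :: rest, P =>
    if (X ∩ P).Nonempty then (X ∩ P) :: (X \ P) :: rest
    else
      match sevr rest P with
      | a :: b :: r => a :: (X ∪ b) :: r
      | l => X :: l

/-- Moderate severe revision. -/
noncomputable def msev (C : List (Set M)) (P : Set M) : List (Set M) :=
  C.map (· ∩ P) ++ (sevw C P).map (· \ P)

/-- Merge `A` with the first nonempty class of the list (helper for `psev`). -/
noncomputable def mergeJ (A : Set M) : List (Set M) → List (Set M)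
  | [] => [A]
  | Y :: r => if Y.Nonempty then (A ∪ Y) :: r else mergeJ A r

/-- Plain severe revision:
`[C(i)∩P, C(0)∪...∪(C(i)\P)∪C(j), C(j+1),...,C(m)]` with `i` least with
`C(i)∩P ≠ ∅` and `j` the least index `> i` with `C(j) ≠ ∅`. -/
noncomputable def psev : List (Set M) → Set M → List (Set M)
  | [], _ => []
  | X :: rest, P =>
    if (X ∩ P).Nonempty then (X ∩ P) :: mergeJ (X \ P) rest
    else
      match psev rest P with
      | a :: b :: r => a :: (X ∪ b) :: r
      | l => X :: l

/-- Full meet revision. -/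
noncomputable def full (C : List (Set M)) (P : Set M) : List (Set M) :=
  [minSet C P, Set.univ \ minSet C P]

/-- `maxset F [F₁,...,Fₖ]`: conjoin each `Fᵢ` in order whenever consistent. -/
noncomputable def maxset : Set M → List (Set M) → Set M
  | F, [] => F
  | F, L :: rest => maxset (if (F ∩ L).Nonempty then F ∩ L else F) rest

/-- The underformula `under(S; Lₙ,...,L₁)`. -/
noncomputable def under : Set M → List (Set M) → Set M
  | _, [] => Set.univ
  | S, L :: rest =>
    if (S ∩ L).Nonempty then L ∩ under (S ∩ L) rest else L ∪ under S rest

/-- `upTo C S = C(0) ∪ ... ∪ C(i)` where `i` is least with `C(i)∩S ≠ ∅`. -/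
noncomputable def upTo : List (Set M) → Set M → Set M
  | [], _ => ∅
  | X :: rest, S => if (X ∩ S).Nonempty then X else X ∪ upTo rest S

noncomputable def longestAux : Set M → List (Set M) → Set M
  | A, [] => A
  | A, L :: rest => if (A ∩ L).Nonempty then longestAux (A ∩ L) rest else A

/-- Longest consistent conjunction of a sequence of formulas. -/
noncomputable def longest : List (Set M) → Set M
  | [] => Set.univ
  | L :: rest => longestAux L rest

/-- `rev` is a bottom-refining revision on `(C,P)`: it is a revision
(`min(C rev(P),⊤) = min(C,P)`) and, whenever `C(0)∩Mod(P) ≠ ∅`, class zero of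
the result is `C(0)∩Mod(P)` and class one is `C(0)\Mod(P)`. -/
noncomputable def BottomRefining (rev : List (Set M) → Set M → List (Set M))
    (C : List (Set M)) (P : Set M) : Prop :=
  minSet (rev C P) Set.univ = minSet C P ∧
  ((C.getD 0 ∅ ∩ P).Nonempty →
    (rev C P).getD 0 ∅ = C.getD 0 ∅ ∩ P ∧
    (rev C P).getD 1 ∅ = C.getD 0 ∅ \ P)

lemma mem_foldr_union {x : M} {A : List (Set M)} :
    x ∈ A.foldr (· ∪ ·) ∅ ↔ ∃ X ∈ A, x ∈ X := by
  induction A with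
  | nil => simp
  | cons X r ih => simp [ih]

lemma foldr_union_append (A B : List (Set M)) :
    (A ++ B).foldr (· ∪ ·) ∅ = A.foldr (· ∪ ·) ∅ ∪ B.foldr (· ∪ ·) ∅ := by
  induction A with
  | nil => simp
  | cons X r ih => simp [ih, Set.union_assoc]

lemma foldr_union_map_inter (A : List (Set M)) (L : Set M) :
    (A.map (· ∩ L)).foldr (· ∪ ·) ∅ = A.foldr (· ∪ ·) ∅ ∩ L := by
  induction A with
  | nil => simp
  | cons X r ih => simp [ih, Set.union_inter_distrib_right]

lemma upTo_map_inter (A : List (Set M)) (L S : Set M) :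
    upTo (A.map (· ∩ L)) S = L ∩ upTo A (S ∩ L) := by
  induction A with
  | nil => simp [upTo]
  | cons X r ih =>
    have h : (X ∩ L) ∩ S = X ∩ (S ∩ L) := by ext x; simp; tauto
    simp only [List.map, upTo, ih, h]
    split_ifs with h1
    · ext x; simp; tauto
    · ext x; simp; tauto

lemma upTo_append_pos {A : List (Set M)} {S : Set M}
    (h : ∃ X ∈ A, (X ∩ S).Nonempty) (B : List (Set M)) :
    upTo (A ++ B) S = upTo A S := by
  induction A with
  | nil => simp at h
  | cons X r ih =>
    simp only [List.cons_append, upTo]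
    by_cases h1 : (X ∩ S).Nonempty
    · simp [h1]
    · have h2 : ∃ Y ∈ r, (Y ∩ S).Nonempty := by
        rcases h with ⟨Y, hY, hne⟩
        rcases List.mem_cons.1 hY with rfl | hY
        · exact absurd hne h1
        · exact ⟨Y, hY, hne⟩
      simp [h1, ih h2]

lemma upTo_append_neg {A : List (Set M)} {S : Set M}
    (h : ¬ ∃ X ∈ A, (X ∩ S).Nonempty) (B : List (Set M)) :
    upTo (A ++ B) S = A.foldr (· ∪ ·) ∅ ∪ upTo B S := by
  induction A with
  | nil => simp
  | cons X r ih =>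
    have h1 : ¬ (X ∩ S).Nonempty := fun hne => h ⟨X, List.mem_cons_self, hne⟩
    have h2 : ¬ ∃ Y ∈ r, (Y ∩ S).Nonempty := by
      rintro ⟨Y, hY, hne⟩; exact h ⟨Y, List.mem_cons_of_mem _ hY, hne⟩
    simp only [List.cons_append, upTo, if_neg h1, List.foldr, List.append_eq,
      ih h2, Set.union_assoc]

lemma upTo_lex_pos {C : List (Set M)} (hC : C.foldr (· ∪ ·) ∅ = Set.univ)
    {L S : Set M} (h : (S ∩ L).Nonempty) :
    upTo (lex C L) S = L ∩ upTo C (S ∩ L) := by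
  rcases h with ⟨x, hxS, hxL⟩
  have hx' : x ∈ C.foldr (· ∪ ·) ∅ := by rw [hC]; trivial
  rcases mem_foldr_union.1 hx' with ⟨X, hX, hxX⟩
  have hex : ∃ Y ∈ C.map (· ∩ L), (Y ∩ S).Nonempty :=
    ⟨X ∩ L, List.mem_map_of_mem hX, ⟨x, ⟨hxX, hxL⟩, hxS⟩⟩
  rw [lex, upTo_append_pos hex, upTo_map_inter]

lemma upTo_lex_neg {C : List (Set M)} (hC : C.foldr (· ∪ ·) ∅ = Set.univ)
    {L S : Set M} (h : ¬ (S ∩ L).Nonempty) :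
    upTo (lex C L) S = L ∪ upTo C S := by
  have hSL : S ∩ L = ∅ := Set.not_nonempty_iff_eq_empty.1 h
  have hex : ¬ ∃ Y ∈ C.map (· ∩ L), (Y ∩ S).Nonempty := by
    rintro ⟨Y, hY, x, hxY, hxS⟩
    rcases List.mem_map.1 hY with ⟨X, _, rfl⟩
    exact absurd (Set.mem_inter hxS hxY.2) (by rw [hSL]; exact id)
  have hmap : C.map (· \ L) = C.map (· ∩ Lᶜ) := by
    simp [Set.diff_eq]
  have hS' : S ∩ Lᶜ = S := by
    ext x; simp only [Set.mem_inter_iff, Set.mem_compl_iff, and_iff_left_iff_imp]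
    intro hxS hxL
    exact absurd (Set.mem_inter hxS hxL) (by rw [hSL]; exact id)
  rw [lex, upTo_append_neg hex, foldr_union_map_inter, hC, hmap, upTo_map_inter, hS']
  ext x; by_cases hx : x ∈ L <;> simp [hx]

lemma foldr_union_lex {C : List (Set M)} (hC : C.foldr (· ∪ ·) ∅ = Set.univ)
    (L : Set M) : (lex C L).foldr (· ∪ ·) ∅ = Set.univ := by
  rw [lex, foldr_union_append, foldr_union_map_inter]
  have : C.map (· \ L) = C.map (· ∩ Lᶜ) := by simp [Set.diff_eq]
  rw [this, foldr_union_map_inter, hC]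
  ext x; by_cases hx : x ∈ L <;> simp [hx]

lemma upTo_eq_under (Ls : List (Set M)) :
    (Ls.foldl lex [Set.univ]).foldr (· ∪ ·) ∅ = Set.univ ∧
    ∀ S, upTo (Ls.foldl lex [Set.univ]) S = under S Ls.reverse := by
  induction Ls using List.reverseRecOn with
  | nil =>
    refine ⟨by simp, fun S => ?_⟩
    rw [List.reverse_nil, under]
    simp only [List.foldl_nil, upTo]
    split_ifs <;> simp [upTo]
  | append_singleton Ls L ih =>
    obtain ⟨hcov, hup⟩ := ih
    have h1 : (Ls ++ [L]).foldl lex [Set.univ] = lex (Ls.foldl lex [Set.univ]) L := by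
      simp [List.foldl_append]
    have h2 : (Ls ++ [L]).reverse = L :: Ls.reverse := by simp
    refine ⟨by rw [h1]; exact foldr_union_lex hcov L, fun S => ?_⟩
    rw [h1, h2, under]
    by_cases h : (S ∩ L).Nonempty
    · rw [if_pos h, upTo_lex_pos hcov h, hup]
    · rw [if_neg h, upTo_lex_neg hcov h, hup]

lemma maxset_subset (ls : List (Set M)) : ∀ F : Set M, maxset F ls ⊆ F := by
  induction ls with
  | nil => intro F; simp [maxset]
  | cons L r ih =>
    intro F
    rw [maxset]
    split_ifs with h
    · exact (ih _).trans Set.inter_subset_left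
    · exact ih _

lemma maxset_singleton (I : M) (ls : List (Set M)) : maxset {I} ls = {I} := by
  induction ls with
  | nil => simp [maxset]
  | cons L r ih =>
    rw [maxset]
    split_ifs with h
    · have hIL : I ∈ L := by
        rcases h with ⟨x, hx, hxL⟩
        exact Set.mem_singleton_iff.1 hx ▸ hxL
      have : ({I} : Set M) ∩ L = {I} := by
        ext y; simp only [Set.mem_inter_iff, Set.mem_singleton_iff, and_iff_left_iff_imp]
        rintro rfl; exact hIL
      rw [this, ih]
    · exact ih

lemma mem_maxset_iff_under (I : M) (ls : List (Set M)) :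
    ∀ S : Set M, I ∈ maxset (S ∪ {I}) ls ↔ I ∈ under S ls := by
  induction ls with
  | nil => intro S; simp [maxset, under]
  | cons L r ih =>
    intro S
    rw [maxset, under]
    by_cases hSL : (S ∩ L).Nonempty
    · have hne : ((S ∪ {I}) ∩ L).Nonempty :=
        hSL.mono (Set.inter_subset_inter_left _ Set.subset_union_left)
      rw [if_pos hne, if_pos hSL]
      by_cases hIL : I ∈ L
      · have heq : (S ∪ {I}) ∩ L = (S ∩ L) ∪ {I} := by
          ext x; simp only [Set.mem_inter_iff, Set.mem_union, Set.mem_singleton_iff]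
          constructor
          · rintro ⟨h1 | rfl, h2⟩
            · exact Or.inl ⟨h1, h2⟩
            · exact Or.inr rfl
          · rintro (⟨h1, h2⟩ | rfl)
            · exact ⟨Or.inl h1, h2⟩
            · exact ⟨Or.inr rfl, hIL⟩
        rw [heq, ih]
        simp [hIL]
      · have heq : (S ∪ {I}) ∩ L = S ∩ L := by
          ext x; simp only [Set.mem_inter_iff, Set.mem_union, Set.mem_singleton_iff]
          constructor
          · rintro ⟨h1 | rfl, h2⟩
            · exact ⟨h1, h2⟩
            · exact absurd h2 hIL
          · rintro ⟨h1, h2⟩; exact ⟨Or.inl h1, h2⟩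
        rw [heq]
        constructor
        · intro h
          exact absurd (maxset_subset r _ h).2 hIL
        · intro h
          exact absurd h.1 hIL
    · rw [if_neg hSL]
      have hSLe : S ∩ L = ∅ := Set.not_nonempty_iff_eq_empty.1 hSL
      by_cases hIL : I ∈ L
      · have hne : ((S ∪ {I}) ∩ L).Nonempty := ⟨I, Or.inr rfl, hIL⟩
        rw [if_pos hne]
        have heq : (S ∪ {I}) ∩ L = {I} := by
          ext x; simp only [Set.mem_inter_iff, Set.mem_union, Set.mem_singleton_iff]
          constructor
          · rintro ⟨h1 | rfl, h2⟩
            · exact absurd (Set.mem_inter h1 h2) (by rw [hSLe]; exact id)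
            · rfl
          · rintro rfl; exact ⟨Or.inr rfl, hIL⟩
        rw [heq, maxset_singleton]
        simp [hIL]
      · have hne : ¬ ((S ∪ {I}) ∩ L).Nonempty := by
          rintro ⟨x, h1 | h2, hxL⟩
          · exact absurd (Set.mem_inter h1 hxL) (by rw [hSLe]; exact id)
          · rcases h2 with rfl; exact hIL hxL
        rw [if_neg hne, ih]
        simp [hIL]

/-- For a model `I` and consistent `S`: the class of `I` in
`C = ∅ lex(L₁)...lex(Lₙ)` is at most the least class containing a model of `S`
iff `I ⊨ under(S; Lₙ,...,L₁)`; equivalently,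
`I ⊨ maxset(S ∨ Form({I}), Lₙ,...,L₁)` iff `I ⊨ under(S; Lₙ,...,L₁)`. -/
theorem mem_under_iff (Ls : List (Set M)) (S : Set M) (hS : S.Nonempty) (I : M) :
    (I ∈ upTo (Ls.foldl lex [Set.univ]) S ↔ I ∈ under S Ls.reverse) ∧
    (I ∈ maxset (S ∪ {I}) Ls.reverse ↔ I ∈ under S Ls.reverse) := by
  refine ⟨?_, mem_maxset_iff_under I Ls.reverse S⟩
  rw [(upTo_eq_under Ls).2 S]

end BeliefRevision
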